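/- Let A be a bisectorial operator of angle ω on a reflexive Banach space X. Then ker(A²) = ker A and the closure of Ran(A²) equals the closure of Ran A. -/
import Mathlib


/-- Let `A` be a bisectorial operator of angle `ω ∈ (0, π/2)` on a reflexive complex
Banach space `X` (a closed, densely defined operator whose spectrum lies in the closed
bisector `Σ̄^bi_ω` and whose resolvent satisfies `‖z R(z,A)‖ ≤ C` outside `Σ̄^bi_ω`,
encoded here by the family `R` of resolvent operators).  Then `ker A² = ker A` and
`closure (Ran A²) = closure (Ran A)`. -/
theorem stmt15 {X : Type*} [NormedAddCommGroup X] [NormedSpace ℂ X] [CompleteSpace X]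
    -- X is reflexive
    (hrefl : Function.Surjective (NormedSpace.inclusionInDoubleDual ℂ X))
    -- A is a densely defined closed operator with domain `dom`
    (dom : Submodule ℂ X) (hdense : Dense (dom : Set X))
    (A : dom →ₗ[ℂ] X)
    (hclosed : IsClosed {q : X × X | ∃ h : q.1 ∈ dom, A ⟨q.1, h⟩ = q.2})
    -- the closed bisector of angle ω
    (ω : ℝ) (hω : ω ∈ Set.Ioo 0 (Real.pi / 2))
    (bisect : Set ℂ)
    (hbisect : bisect = {z : ℂ | z = 0 ∨ |Complex.arg z| ≤ ω ∨ |Complex.arg (-z)| ≤ ω})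
    -- the spectrum of A lies in the closed bisector: every `z` outside it is in the
    -- resolvent set, with resolvent operator `R z = (z − A)⁻¹`
    (R : ℂ → X →L[ℂ] X) (C : ℝ)
    (hdomR : ∀ z : ℂ, z ∉ bisect → ∀ y : X, R z y ∈ dom)
    (hR_right : ∀ (z : ℂ) (hz : z ∉ bisect) (y : X),
      z • R z y - A ⟨R z y, hdomR z hz y⟩ = y)
    (hR_left : ∀ z : ℂ, z ∉ bisect → ∀ x : dom, R z (z • (x : X) - A x) = x)
    -- uniform bound `‖z R(z,A)‖ ≤ C` outside the bisector
    (hbound : ∀ z : ℂ, z ∉ bisect → ‖z‖ * ‖R z‖ ≤ C) :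
    -- ker A² = ker A
    {x : X | ∃ h : x ∈ dom, ∃ h2 : A ⟨x, h⟩ ∈ dom, A ⟨A ⟨x, h⟩, h2⟩ = 0}
      = {x : X | ∃ h : x ∈ dom, A ⟨x, h⟩ = 0} ∧
    -- closure (Ran A²) = closure (Ran A)
    closure {y : X | ∃ x : X, ∃ h : x ∈ dom, ∃ h2 : A ⟨x, h⟩ ∈ dom, A ⟨A ⟨x, h⟩, h2⟩ = y}
      = closure {y : X | ∃ x : X, ∃ h : x ∈ dom, A ⟨x, h⟩ = y} := by
  -- the imaginary half-axis lies outside the bisector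
  have hout : ∀ t : ℝ, 0 < t → ((t:ℂ) * Complex.I) ∉ bisect := by
    intro t ht hmem
    rw [hbisect] at hmem
    have hpi : (0:ℝ) < Real.pi / 2 := by positivity
    rcases hmem with h | h | h
    · exact (by simp [ht.ne'] : ((t:ℂ)*Complex.I) ≠ 0) h
    · rw [Complex.arg_real_mul _ ht, Complex.arg_I, abs_of_pos hpi] at h
      linarith [hω.2]
    · rw [show -((t:ℂ)*Complex.I) = (t:ℂ)*(-Complex.I) by ring,
        Complex.arg_real_mul _ ht, Complex.arg_neg_I, abs_neg, abs_of_pos hpi] at h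
      linarith [hω.2]
  have hnz : ∀ t : ℝ, 0 < t → ‖((t:ℂ)*Complex.I)‖ = t := by
    intro t ht; simp [abs_of_pos ht]
  have hC : 0 ≤ C := by
    have h1 := hbound _ (hout 1 one_pos)
    have h2 : (0:ℝ) ≤ ‖((1:ℝ):ℂ)*Complex.I‖ * ‖R (((1:ℝ):ℂ)*Complex.I)‖ := by positivity
    linarith
  -- key resolvent identities
  have eq1 : ∀ (z : ℂ) (hz : z ∉ bisect) (x : X) (hx : x ∈ dom),
      R z (A ⟨x, hx⟩) = z • R z x - x := by
    intro z hz x hx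
    have h := hR_left z hz ⟨x, hx⟩
    rw [map_sub, map_smul, sub_eq_iff_eq_add] at h
    rw [show (z • (R z) ((⟨x, hx⟩ : dom) : X) : X) = z • R z x from rfl] at h
    rw [show ((⟨x, hx⟩ : dom) : X) = x from rfl] at h
    rw [h]; abel
  have eq2 : ∀ (z : ℂ) (hz : z ∉ bisect) (y : X),
      A ⟨R z y, hdomR z hz y⟩ = z • R z y - y := by
    intro z hz y
    have h := hR_right z hz y
    rw [sub_eq_iff_eq_add] at h
    rw [h]; abel
  -- the key estimate
  have est : ∀ (t : ℝ), 0 < t → ∀ x : X,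
      ‖((t:ℂ)*Complex.I) • (((t:ℂ)*Complex.I) • R ((t:ℂ)*Complex.I) x)
        - ((t:ℂ)*Complex.I) • x‖ ≤ t * ((C+1) * ‖x‖) := by
    intro t ht x
    set z := (t:ℂ)*Complex.I with hzdef
    have hb := hbound z (hout t ht)
    rw [hnz t ht] at hb
    have h1 : ‖z • R z x‖ ≤ C * ‖x‖ := by
      rw [norm_smul, hnz t ht]
      calc t * ‖R z x‖ ≤ t * (‖R z‖ * ‖x‖) := by
            have := (R z).le_opNorm x
            nlinarith [norm_nonneg (R z x)]
        _ = (t * ‖R z‖) * ‖x‖ := by ring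
        _ ≤ C * ‖x‖ := by nlinarith [norm_nonneg x]
    calc ‖z • (z • R z x) - z • x‖ ≤ ‖z • (z • R z x)‖ + ‖z • x‖ := norm_sub_le _ _
      _ = t * ‖z • R z x‖ + t * ‖x‖ := by
            rw [norm_smul z (z • R z x), norm_smul z x, hnz t ht]
      _ ≤ t * (C * ‖x‖) + t * ‖x‖ := by nlinarith
      _ = t * ((C+1) * ‖x‖) := by ring
  constructor
  · -- kernels
    ext x
    simp only [Set.mem_setOf_eq]
    constructor
    · rintro ⟨h, h2, h3⟩
      refine ⟨h, ?_⟩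
      set y := A ⟨x, h⟩ with hy
      -- for every t > 0, ‖y‖ ≤ t * ((C+1)*‖x‖)
      have key : ∀ t : ℝ, 0 < t → ‖y‖ ≤ t * ((C+1) * ‖x‖) := by
        intro t ht
        set z := (t:ℂ)*Complex.I with hzdef
        have hz := hout t ht
        -- z • R z y = y
        have e2 : z • R z y = y := by
          have h4 := hR_left z hz ⟨y, h2⟩
          rw [h3, sub_zero, map_smul] at h4
          simpa using h4
        have e1 : R z y = z • R z x - x := eq1 z hz x h
        have e3 : y = z • (z • R z x) - z • x := by
          rw [← e2, e1, smul_sub]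
        rw [e3]
        exact est t ht x
      -- hence y = 0
      have hynorm : ‖y‖ ≤ 0 := by
        by_contra hcon
        push_neg at hcon
        have hK : 0 ≤ (C+1) * ‖x‖ := by positivity
        have ht : 0 < ‖y‖ / (2 * ((C+1) * ‖x‖ + 1)) := by positivity
        have := key _ ht
        rw [div_mul_eq_mul_div, le_div_iff₀ (by positivity)] at this
        nlinarith
      exact norm_le_zero_iff.mp hynorm
    · rintro ⟨h, hA⟩
      have h2 : A ⟨x, h⟩ ∈ dom := hA ▸ dom.zero_mem
      refine ⟨h, h2, ?_⟩
      have : (⟨A ⟨x, h⟩, h2⟩ : dom) = 0 := Subtype.ext hA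
      rw [this, map_zero]
  · -- ranges
    apply Set.Subset.antisymm
    · apply closure_mono
      rintro y ⟨x, h, h2, h3⟩
      exact ⟨A ⟨x, h⟩, h2, h3⟩
    · apply closure_minimal _ isClosed_closure
      rintro y ⟨x, hx, rfl⟩
      set y := A ⟨x, hx⟩ with hy
      rw [Metric.mem_closure_iff]
      intro ε hε
      set K := (C+1) * ‖x‖ with hK
      have hK0 : 0 ≤ K := by positivity
      set t := ε / (2 * (K + 1)) with htdef
      have ht : 0 < t := by positivity
      set z := (t:ℂ)*Complex.I with hzdef
      have hz := hout t ht
      -- the approximant: A² applied to -(R z x)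
      have hu : -(R z x) ∈ dom := dom.neg_mem (hdomR z hz x)
      have a1 : A ⟨-(R z x), hu⟩ = x - z • R z x := by
        have : (⟨-(R z x), hu⟩ : dom) = -⟨R z x, hdomR z hz x⟩ := rfl
        rw [this, map_neg, eq2 z hz x]; abel
      have h2' : x - z • R z x ∈ dom := dom.sub_mem hx (dom.smul_mem z (hdomR z hz x))
      have a2 : A ⟨x - z • R z x, h2'⟩ = y - (z • (z • R z x) - z • x) := by
        have : (⟨x - z • R z x, h2'⟩ : dom) = ⟨x, hx⟩ - z • ⟨R z x, hdomR z hz x⟩ :=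
          Subtype.ext rfl
        rw [this, map_sub, map_smul, eq2 z hz x, ← hy, smul_sub]
      have h2 : A ⟨-(R z x), hu⟩ ∈ dom := a1 ▸ h2'
      refine ⟨A ⟨A ⟨-(R z x), hu⟩, h2⟩, ⟨-(R z x), hu, h2, rfl⟩, ?_⟩
      have hsub : (⟨A ⟨-(R z x), hu⟩, h2⟩ : dom) = ⟨x - z • R z x, h2'⟩ := Subtype.ext a1
      rw [hsub, a2, dist_eq_norm]
      have hdist : y - (y - (z • (z • R z x) - z • x)) = z • (z • R z x) - z • x := by abel
      rw [hdist]
      calc ‖z • (z • R z x) - z • x‖ ≤ t * K := est t ht x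
        _ < ε := by
            rw [htdef, div_mul_eq_mul_div, div_lt_iff₀ (by positivity)]
            nlinarith
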